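/- The decision boundary is characterized by equality of the support functions of the two zonotopes: for every x ∈ ℝⁿ, f₁(x) − f₂(x) = sup_{z ∈ Z₁} ⟨z, x⟩ − sup_{z ∈ Z₂} ⟨z, x⟩; consequently, {x ∈ ℝⁿ : f₁(x) = f₂(x)} = {x ∈ ℝⁿ : sup_{z ∈ Z₁} ⟨z, x⟩ = sup_{z ∈ Z₂} ⟨z, x⟩}. -/

import Mathlib

open Matrix Finset Pointwise

/-- Entrywise positive part of a matrix. -/
noncomputable def matPos {p n : ℕ} (M : Matrix (Fin p) (Fin n) ℝ) : Matrix (Fin p) (Fin n) ℝ :=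
  fun i j => max (M i j) 0

/-- Entrywise negative part of a matrix. -/
noncomputable def matNeg {p n : ℕ} (M : Matrix (Fin p) (Fin n) ℝ) : Matrix (Fin p) (Fin n) ℝ :=
  fun i j => max (-(M i j)) 0

/-- Output `i` of the bias-free network `f(x) = B max(Ax, 0)`. -/
noncomputable def netOut {p n k : ℕ} (A : Matrix (Fin p) (Fin n) ℝ)
    (B : Matrix (Fin k) (Fin p) ℝ) (i : Fin k) (x : Fin n → ℝ) : ℝ :=
  ∑ j, B i j * max (A j ⬝ᵥ x) 0

/-- The zonotope `Z_{ij}`: Minkowski sum of the line segments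
`[(B⁺(i,m)+B⁻(j,m))·A⁺(m,:), (B⁺(i,m)+B⁻(j,m))·A⁻(m,:)]` shifted by
`(A⁻)ᵀ (B⁻(i,:)+B⁺(j,:))ᵀ`. -/
noncomputable def zono {p n k : ℕ} (A : Matrix (Fin p) (Fin n) ℝ)
    (B : Matrix (Fin k) (Fin p) ℝ) (i j : Fin k) : Set (Fin n → ℝ) :=
  (∑ m : Fin p,
      segment ℝ ((matPos B i m + matNeg B j m) • matPos A m)
        ((matPos B i m + matNeg B j m) • matNeg A m))
    + ({fun t => ∑ m, matNeg A m t * (matNeg B i m + matPos B j m)} : Set (Fin n → ℝ))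

private lemma sum_dotProduct' {p n : ℕ} (g : Fin p → (Fin n → ℝ)) (x : Fin n → ℝ) :
    (∑ m, g m) ⬝ᵥ x = ∑ m, g m ⬝ᵥ x := by
  simp only [dotProduct, Finset.sum_apply, Finset.sum_mul]
  exact Finset.sum_comm

private lemma shift_dotProduct {p n k : ℕ} (A : Matrix (Fin p) (Fin n) ℝ)
    (B : Matrix (Fin k) (Fin p) ℝ) (i j : Fin k) (x : Fin n → ℝ) :
    (fun t => ∑ m, matNeg A m t * (matNeg B i m + matPos B j m)) ⬝ᵥ x
      = ∑ m, (matNeg B i m + matPos B j m) * (matNeg A m ⬝ᵥ x) := by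
  simp only [dotProduct, Finset.sum_mul, Finset.mul_sum]
  rw [Finset.sum_comm]
  exact Finset.sum_congr rfl fun m _ => Finset.sum_congr rfl fun t _ => by ring

/-- The support function of the zonotope. -/
private lemma zono_sup {p n k : ℕ} (A : Matrix (Fin p) (Fin n) ℝ)
    (B : Matrix (Fin k) (Fin p) ℝ) (i j : Fin k) (x : Fin n → ℝ) :
    sSup ((fun z => z ⬝ᵥ x) '' zono A B i j)
      = ∑ m, ((matPos B i m + matNeg B j m) * max (matPos A m ⬝ᵥ x) (matNeg A m ⬝ᵥ x)
          + (matNeg B i m + matPos B j m) * (matNeg A m ⬝ᵥ x)) := by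
  set c : Fin p → ℝ := fun m => matPos B i m + matNeg B j m with hc
  have hcnn : ∀ m, 0 ≤ c m := fun m =>
    add_nonneg (le_max_right _ _) (le_max_right _ _)
  set sh : Fin n → ℝ := fun t => ∑ m, matNeg A m t * (matNeg B i m + matPos B j m) with hsh
  have hshv : sh ⬝ᵥ x = ∑ m, (matNeg B i m + matPos B j m) * (matNeg A m ⬝ᵥ x) :=
    shift_dotProduct A B i j x
  apply IsGreatest.csSup_eq
  constructor
  · -- the claimed supremum value is attained
    classical
    set g : Fin p → (Fin n → ℝ) := fun m =>
      if matNeg A m ⬝ᵥ x ≤ matPos A m ⬝ᵥ x then c m • matPos A m else c m • matNeg A m with hg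
    refine ⟨(∑ m, g m) + sh, ?_, ?_⟩
    · refine Set.add_mem_add ?_ rfl
      refine Set.finset_sum_mem_finset_sum _ _ _ fun m _ => ?_
      by_cases h : matNeg A m ⬝ᵥ x ≤ matPos A m ⬝ᵥ x
      · simp only [hg, if_pos h]; exact left_mem_segment ℝ _ _
      · simp only [hg, if_neg h]; exact right_mem_segment ℝ _ _
    · simp only [add_dotProduct, sum_dotProduct', hshv]
      rw [Finset.sum_add_distrib]
      congr 1
      refine Finset.sum_congr rfl fun m _ => ?_
      by_cases h : matNeg A m ⬝ᵥ x ≤ matPos A m ⬝ᵥ x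
      · simp only [hg, hc, if_pos h, smul_dotProduct, smul_eq_mul, max_eq_left h]
      · simp only [hg, hc, if_neg h, smul_dotProduct, smul_eq_mul,
          max_eq_right (le_of_not_ge h)]
  · -- it is an upper bound
    rintro y ⟨z, hz, rfl⟩
    rw [zono, Set.add_singleton] at hz
    obtain ⟨s, hs, rfl⟩ := hz
    rw [Set.mem_fintype_sum] at hs
    obtain ⟨g, hgm, rfl⟩ := hs
    simp only [add_dotProduct, sum_dotProduct', hshv]
    rw [Finset.sum_add_distrib]
    refine add_le_add (Finset.sum_le_sum fun m _ => ?_) (le_of_eq hshv)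
    obtain ⟨u, v, hu, hv, huv, hguv⟩ := hgm m
    rw [← hguv]
    simp only [add_dotProduct, smul_dotProduct, smul_eq_mul]
    have h1 : matPos A m ⬝ᵥ x ≤ max (matPos A m ⬝ᵥ x) (matNeg A m ⬝ᵥ x) := le_max_left _ _
    have h2 : matNeg A m ⬝ᵥ x ≤ max (matPos A m ⬝ᵥ x) (matNeg A m ⬝ᵥ x) := le_max_right _ _
    have hcm : (0:ℝ) ≤ matPos B i m + matNeg B j m := hcnn m
    refine le_trans (add_le_add
      (mul_le_mul_of_nonneg_left (mul_le_mul_of_nonneg_left h1 hcm) hu)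
      (mul_le_mul_of_nonneg_left (mul_le_mul_of_nonneg_left h2 hcm) hv)) ?_
    rw [← add_mul, huv, one_mul]

private lemma posneg_dot {p n : ℕ} (A : Matrix (Fin p) (Fin n) ℝ) (m : Fin p) (x : Fin n → ℝ) :
    matPos A m ⬝ᵥ x - matNeg A m ⬝ᵥ x = A m ⬝ᵥ x := by
  simp only [dotProduct, ← Finset.sum_sub_distrib, ← sub_mul, matPos, matNeg,
    max_zero_sub_max_neg_zero_eq_self]

/-- The difference of the two network outputs is the difference of the support functions of
the zonotopes `Z₁`, `Z₂`; consequently the decision boundary `{x : f₁(x) = f₂(x)}` is exactly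
the set where the two support functions coincide. -/
theorem decision_boundary_support_functions {p n : ℕ}
    (A : Matrix (Fin p) (Fin n) ℝ) (B : Matrix (Fin 2) (Fin p) ℝ) :
    (∀ x : Fin n → ℝ,
      netOut A B 0 x - netOut A B 1 x
        = sSup ((fun z => z ⬝ᵥ x) '' zono A B 0 1) - sSup ((fun z => z ⬝ᵥ x) '' zono A B 1 0)) ∧
    {x : Fin n → ℝ | netOut A B 0 x = netOut A B 1 x}
      = {x : Fin n → ℝ |
          sSup ((fun z => z ⬝ᵥ x) '' zono A B 0 1) = sSup ((fun z => z ⬝ᵥ x) '' zono A B 1 0)} := by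
  have key : ∀ x : Fin n → ℝ,
      netOut A B 0 x - netOut A B 1 x
        = sSup ((fun z => z ⬝ᵥ x) '' zono A B 0 1) - sSup ((fun z => z ⬝ᵥ x) '' zono A B 1 0) := by
    intro x
    rw [zono_sup, zono_sup, netOut, netOut, ← Finset.sum_sub_distrib, ← Finset.sum_sub_distrib]
    refine Finset.sum_congr rfl fun m _ => ?_
    have hab : matPos A m ⬝ᵥ x - matNeg A m ⬝ᵥ x = A m ⬝ᵥ x := posneg_dot A m x
    have h3 : max (matPos A m ⬝ᵥ x) (matNeg A m ⬝ᵥ x) - matNeg A m ⬝ᵥ x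
        = max (A m ⬝ᵥ x) 0 := by
      rw [← hab, ← max_sub_sub_right, sub_self]
    have h1 : matPos B 0 m - matNeg B 0 m = B 0 m :=
      max_zero_sub_max_neg_zero_eq_self _
    have h2 : matPos B 1 m - matNeg B 1 m = B 1 m :=
      max_zero_sub_max_neg_zero_eq_self _
    linear_combination (B 1 m - B 0 m) * h3
      + (max (matPos A m ⬝ᵥ x) (matNeg A m ⬝ᵥ x) - matNeg A m ⬝ᵥ x) * (h2 - h1)
  refine ⟨key, ?_⟩
  ext x
  simp only [Set.mem_setOf_eq]
  constructor
  · intro h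
    have := key x
    rw [h, sub_self] at this
    linarith
  · intro h
    have := key x
    rw [h, sub_self] at this
    linarith
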